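/- Let J : ℕ → (0,∞) be a nondecreasing function that is subexponentially bounded, i.e., for every α > 0 there exists C_α > 0 such that J(n) ≤ C_α · exp(α·n) for all n. Then liminf_{n→∞} J(n+4)/J(n) = 1. -/

import Mathlib

open Filter

private lemma key_aux (J : ℕ → ℝ) (hpos : ∀ n, 0 < J n) (hmono : Monotone J)
    (hsub : ∀ α : ℝ, 0 < α → ∃ Cα : ℝ, 0 < Cα ∧ ∀ n : ℕ, J n ≤ Cα * Real.exp (α * n))
    (a : ℝ) (ha : 1 < a) (h : ∀ᶠ n in atTop, a ≤ J (n + 4) / J n) : False := by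
  obtain ⟨N, hN⟩ := eventually_atTop.1 h
  have ha0 : 0 < a := lt_trans one_pos ha
  have hstep : ∀ n, N ≤ n → a * J n ≤ J (n + 4) := by
    intro n hn
    have := hN n hn
    rw [le_div_iff₀ (hpos n)] at this
    linarith
  have hind : ∀ k : ℕ, a ^ k * J N ≤ J (N + 4 * k) := by
    intro k
    induction k with
    | zero => simp
    | succ k ih =>
      have h1 : a * J (N + 4 * k) ≤ J (N + 4 * k + 4) :=
        hstep _ (Nat.le_add_right _ _)
      have h2 : a * (a ^ k * J N) ≤ a * J (N + 4 * k) :=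
        mul_le_mul_of_nonneg_left ih ha0.le
      have : N + 4 * (k + 1) = N + 4 * k + 4 := by ring
      rw [this, pow_succ]
      nlinarith
  set α : ℝ := Real.log a / 5 with hα
  have hα0 : 0 < α := by
    have := Real.log_pos ha
    positivity
  obtain ⟨C, hC0, hC⟩ := hsub α hα0
  set r : ℝ := Real.exp α with hr
  have hr1 : 1 < r := by
    rw [hr, show (1:ℝ) = Real.exp 0 by simp]
    exact Real.exp_lt_exp.mpr hα0
  have hr0 : 0 < r := lt_trans one_pos hr1
  have hr5 : r ^ 5 = a := by
    rw [hr, ← Real.exp_nat_mul,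
      show ((5:ℕ):ℝ) * α = Real.log a by push_cast [hα]; ring]
    exact Real.exp_log ha0
  set M : ℝ := C * Real.exp (α * N) / J N with hM
  have hbound : ∀ k : ℕ, r ^ k ≤ M := by
    intro k
    have h1 : a ^ k * J N ≤ J (N + 4 * k) := hind k
    have h2 : J (N + 4 * k) ≤ C * Real.exp (α * (N + 4 * k)) := by
      have := hC (N + 4 * k)
      push_cast at this ⊢
      convert this using 4
    have hexp : Real.exp (α * ((N : ℝ) + 4 * k)) = Real.exp (α * N) * r ^ (4 * k) := by
      rw [hr, ← Real.exp_nat_mul, ← Real.exp_add]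
      congr 1
      push_cast
      ring
    have hak : a ^ k = r ^ (5 * k) := by
      rw [← hr5, ← pow_mul]
    have h3 : r ^ (5 * k) * J N ≤ C * Real.exp (α * N) * r ^ (4 * k) := by
      calc r ^ (5 * k) * J N = a ^ k * J N := by rw [hak]
        _ ≤ J (N + 4 * k) := h1
        _ ≤ C * Real.exp (α * ((N : ℝ) + 4 * k)) := by
            have := h2; push_cast at this ⊢; linarith
        _ = C * Real.exp (α * N) * r ^ (4 * k) := by rw [hexp]; ring
    have h5 : r ^ (5 * k) = r ^ (4 * k) * r ^ k := by rw [← pow_add]; ring_nf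
    rw [hM, le_div_iff₀ (hpos N)]
    have hrk : 0 < r ^ (4 * k) := pow_pos hr0 _
    calc r ^ k * J N = (r ^ (5 * k) * J N) / r ^ (4 * k) := by
          rw [h5]; field_simp
      _ ≤ (C * Real.exp (α * N) * r ^ (4 * k)) / r ^ (4 * k) :=
          div_le_div_of_nonneg_right h3 hrk.le |>.trans_eq rfl
      _ = C * Real.exp (α * N) := by field_simp
  have htend : Tendsto (fun k : ℕ => r ^ k) atTop atTop :=
    tendsto_pow_atTop_atTop_of_one_lt hr1
  obtain ⟨k, hk⟩ := (htend.eventually_gt_atTop M).exists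
  exact absurd (hbound k) (not_le.2 hk)

/-- If `J : ℕ → (0,∞)` is nondecreasing and subexponentially bounded, then
`liminf J(n+4)/J(n) = 1`. -/
theorem stmt1 (J : ℕ → ℝ) (hpos : ∀ n, 0 < J n) (hmono : Monotone J)
    (hsub : ∀ α : ℝ, 0 < α → ∃ Cα : ℝ, 0 < Cα ∧ ∀ n : ℕ, J n ≤ Cα * Real.exp (α * n)) :
    Filter.liminf (fun n => J (n + 4) / J n) Filter.atTop = 1 := by
  rw [Filter.liminf_eq]
  apply IsGreatest.csSup_eq
  constructor
  · -- 1 is in the set: eventually 1 ≤ ratio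
    refine Filter.Eventually.of_forall fun n => ?_
    rw [le_div_iff₀ (hpos n)]
    simpa using hmono (Nat.le_add_right n 4)
  · intro a ha
    by_contra hle
    push_neg at hle
    exact key_aux J hpos hmono hsub a hle ha
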